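/- Let p be a prime with p ≡ 1 or 4 (mod 5) such that ν_p(F_{α(p)}) = 1. Then the ℤ-submodule of the module of sequences ℕ → ℤ spanned by the p-kernel of the sequence a(n) = ν_p(F_{n+1}) is generated by the p sequences n ↦ ν_p(F_{n+1}) and n ↦ ν_p(F_{pn+j+1}) for 0 ≤ j ≤ p − 2. In particular, this sequence is p-regular of rank at most p. -/

import Mathlib

/-- The restricted period (rank of apparition) of the Fibonacci sequence modulo `p`:
the least positive `n` such that `p ∣ F n`. -/
noncomputable def fibAlpha (p : ℕ) : ℕ := sInf {n | 0 < n ∧ p ∣ Nat.fib n}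

/-- The `k`-kernel of a sequence `a : ℕ → ℤ`: the set of sequences
`n ↦ a (k ^ e * n + i)` for `e ≥ 0` and `0 ≤ i ≤ k ^ e - 1`. -/
def kKernel (k : ℕ) (a : ℕ → ℤ) : Set (ℕ → ℤ) :=
  {b | ∃ e i : ℕ, i ≤ k ^ e - 1 ∧ b = fun n => a (k ^ e * n + i)}

open Nat



lemma fib_binet {p : ℕ} [Fact p.Prime] (ph : ZMod p) (hph : ph^2 = ph + 1) (n : ℕ) :
    (Nat.fib n : ZMod p) * (2*ph - 1) = ph^n - (1-ph)^n := by
  induction n using Nat.strong_induction_on with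
  | _ n ih =>
    match n with
    | 0 => simp
    | 1 => push_cast [Nat.fib_one]; ring
    | (m+2) =>
      rw [Nat.fib_add_two]
      push_cast
      rw [add_mul, ih m (by omega), ih (m+1) (by omega)]
      linear_combination ((1-ph)^m - ph^m) * hph

lemma dvd_fib_pred {p : ℕ} (hp : p.Prime) (h : p % 5 = 1 ∨ p % 5 = 4) :
    p ∣ Nat.fib (p - 1) := by
  haveI : Fact p.Prime := ⟨hp⟩
  have hp5 : p ≠ 5 := by rintro rfl; omega
  have hp2 : p ≠ 2 := by rintro rfl; omega
  haveI : Fact (Nat.Prime 5) := ⟨by norm_num⟩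
  have hsq : IsSquare ((5 : ℕ) : ZMod p) := by
    have h5p : IsSquare ((p : ℕ) : ZMod 5) := by
      have : ((p : ZMod 5)) = ((p % 5 : ℕ) : ZMod 5) := by rw [ZMod.natCast_mod]
      rcases h with h | h
      · rw [this, h]
        have h1 : ((1:ℕ) : ZMod 5) = 1 * 1 := by norm_num
        exact ⟨1, h1⟩
      · rw [this, h]
        have h4 : ((4:ℕ) : ZMod 5) = 2 * 2 := by norm_num
        exact ⟨2, h4⟩
    have := (ZMod.exists_sq_eq_prime_iff_of_mod_four_eq_one (p := 5) (q := p)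
      (by norm_num) hp2).mp h5p
    exact_mod_cast this
  obtain ⟨s, hs⟩ := hsq
  have hs' : (5 : ZMod p) = s * s := by exact_mod_cast hs
  have h5 : (5 : ZMod p) ≠ 0 := by
    have : ((5 : ℕ) : ZMod p) ≠ 0 := by
      rw [Ne, ZMod.natCast_eq_zero_iff]
      intro hd
      exact hp5 ((Nat.prime_dvd_prime_iff_eq hp (by norm_num)).mp hd)
    exact_mod_cast this
  have h2 : (2 : ZMod p) ≠ 0 := by
    have : ((2 : ℕ) : ZMod p) ≠ 0 := by
      rw [Ne, ZMod.natCast_eq_zero_iff]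
      intro hd
      exact hp2 ((Nat.prime_dvd_prime_iff_eq hp (by norm_num)).mp hd)
    exact_mod_cast this
  set ph : ZMod p := (1 + s) * (2 : ZMod p)⁻¹ with hph_def
  have hph : ph^2 = ph + 1 := by
    rw [hph_def]
    field_simp
    linear_combination -hs'
  have hprod : ph * (1 - ph) = -1 := by linear_combination -hph
  have hphne : ph ≠ 0 := by
    intro h0
    rw [h0, zero_mul] at hprod
    exact (neg_ne_zero.mpr one_ne_zero) hprod.symm
  have h1phne : (1 - ph) ≠ 0 := by
    intro h0
    rw [h0, mul_zero] at hprod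
    exact (neg_ne_zero.mpr one_ne_zero) hprod.symm
  have key := fib_binet ph hph (p - 1)
  rw [ZMod.pow_card_sub_one_eq_one hphne, ZMod.pow_card_sub_one_eq_one h1phne,
    sub_self] at key
  have hrne : (2*ph - 1) ≠ 0 := by
    intro h0
    have : (5 : ZMod p) = 0 := by linear_combination (-4)*hph + (2*ph - 1)*h0
    exact h5 this
  have : ((Nat.fib (p-1) : ℕ) : ZMod p) = 0 := by
    rcases mul_eq_zero.mp key with h' | h'
    · exact h'
    · exact absurd h' hrne
  exact (ZMod.natCast_eq_zero_iff _ _).mp this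




section B
variable {p : ℕ}

lemma alpha_spec (hp : p.Prime) (hd : p ∣ Nat.fib (p-1)) :
    0 < fibAlpha p ∧ p ∣ Nat.fib (fibAlpha p) := by
  have hne : {n | 0 < n ∧ p ∣ Nat.fib n}.Nonempty :=
    ⟨p - 1, by have := hp.two_le; omega, hd⟩
  exact Nat.sInf_mem hne

lemma dvd_fib_iff (hp : p.Prime) (hd : p ∣ Nat.fib (p-1)) (n : ℕ) :
    p ∣ Nat.fib n ↔ fibAlpha p ∣ n := by
  rcases Nat.eq_zero_or_pos n with rfl | hn
  · simp
  constructor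
  · intro hpn
    have hg : p ∣ Nat.fib (Nat.gcd (fibAlpha p) n) := by
      rw [Nat.fib_gcd]; exact Nat.dvd_gcd (alpha_spec hp hd).2 hpn
    have hgpos : 0 < Nat.gcd (fibAlpha p) n := Nat.gcd_pos_of_pos_right _ hn
    have hle : fibAlpha p ≤ Nat.gcd (fibAlpha p) n := Nat.sInf_le ⟨hgpos, hg⟩
    have hge : Nat.gcd (fibAlpha p) n ≤ fibAlpha p :=
      Nat.le_of_dvd (alpha_spec hp hd).1 (Nat.gcd_dvd_left _ _)
    have heq : Nat.gcd (fibAlpha p) n = fibAlpha p := le_antisymm hge hle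
    rw [← heq]; exact Nat.gcd_dvd_right _ _
  · intro hdvd; exact dvd_trans (alpha_spec hp hd).2 (Nat.fib_dvd _ _ hdvd)

lemma alpha_dvd_pred (hp : p.Prime) (hd : p ∣ Nat.fib (p-1)) : fibAlpha p ∣ p - 1 :=
  (dvd_fib_iff hp hd _).mp hd

lemma alpha_le_pred (hp : p.Prime) (hd : p ∣ Nat.fib (p-1)) : fibAlpha p ≤ p - 1 :=
  Nat.le_of_dvd (by have := hp.two_le; omega) (alpha_dvd_pred hp hd)

lemma p_not_dvd_alpha (hp : p.Prime) (hd : p ∣ Nat.fib (p-1)) : ¬ p ∣ fibAlpha p := by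
  intro hdd
  have h1 : p ≤ fibAlpha p := Nat.le_of_dvd (alpha_spec hp hd).1 hdd
  have := alpha_le_pred hp hd
  have := hp.two_le
  omega

end B

section C

lemma fib_add_int (m n : ℕ) : (Nat.fib (m+n) : ℤ) =
    Nat.fib m * Nat.fib (n+1) + Nat.fib (m+1) * Nat.fib n - Nat.fib m * Nat.fib n := by
  cases m with
  | zero => simp
  | succ m =>
    have e : m+1+n = m+n+1 := by omega
    rw [e, Nat.fib_add, show m+1+1 = m+2 from rfl, Nat.fib_add_two]
    push_cast
    ring

lemma key_id (n k : ℕ) : ∃ x y : ℤ,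
    (Nat.fib (k*n) : ℤ) * (Nat.fib (n+1) : ℤ)^2 =
      k * (Nat.fib n) * (Nat.fib (n+1):ℤ)^(k+1)
        - (k.choose 2) * (Nat.fib n : ℤ)^2 * (Nat.fib (n+1):ℤ)^k + x * (Nat.fib n:ℤ)^3 ∧
    (Nat.fib (k*n+1) : ℤ) * (Nat.fib (n+1):ℤ)^2 =
      (Nat.fib (n+1):ℤ)^(k+2)
        + (k.choose 2) * (Nat.fib n:ℤ)^2 * (Nat.fib (n+1):ℤ)^k + y * (Nat.fib n:ℤ)^3 := by
  set c : ℤ := (Nat.fib n : ℤ) with hc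
  set d : ℤ := (Nat.fib (n+1) : ℤ) with hd
  induction k with
  | zero => exact ⟨0, 0, by simp, by simp⟩
  | succ k ih =>
    obtain ⟨x, y, hA, hB⟩ := ih
    have hadd : (Nat.fib ((k+1)*n) : ℤ) =
        Nat.fib (k*n) * d + Nat.fib (k*n+1) * c - Nat.fib (k*n) * c := by
      rw [Nat.succ_mul, fib_add_int]
    have hadd2 : (Nat.fib ((k+1)*n+1) : ℤ) = Nat.fib (k*n) * c + Nat.fib (k*n+1) * d := by
      rw [Nat.succ_mul]
      have := Nat.fib_add (k*n) n
      push_cast [this]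
      ring
    have hch : (((k+1).choose 2 : ℕ) : ℤ) = (k.choose 2 : ℤ) + k := by
      rw [Nat.choose_succ_succ, Nat.choose_one_right]; push_cast; ring
    refine ⟨x*d - x*c + 2*(k.choose 2)*d^k + y*c, -((k.choose 2 : ℤ))*d^k + x*c + y*d, ?_, ?_⟩
    · rw [hch]
      push_cast
      linear_combination d^2 * hadd + (d - c) * hA + c * hB
    · rw [hch]
      push_cast
      linear_combination d^2 * hadd2 + c * hA + d * hB

end C


section D
variable {p : ℕ}

lemma prime_int {p : ℕ} (hp : p.Prime) : Prime (p : ℤ) := by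
  rw [Int.prime_iff_natAbs_prime]; simpa using hp

lemma int_pow_dvd_of_dvd_mul {q d : ℤ} (hq : Prime q) (h : ¬ q ∣ d) :
    ∀ (v : ℕ) (a : ℤ), q^v ∣ a * d → q^v ∣ a := by
  intro v
  induction v with
  | zero => simp
  | succ v ih =>
    intro a hdvd
    have h1 : q ∣ a := by
      have hq1 : q ∣ a * d := dvd_trans (dvd_pow_self q (Nat.succ_ne_zero v)) hdvd
      rcases hq.dvd_mul.mp hq1 with h' | h'
      · exact h'
      · exact absurd h' h
    obtain ⟨a', rfl⟩ := h1
    obtain ⟨m, hm⟩ := hdvd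
    have hm' : a' * d = q^v * m := by
      apply mul_left_cancel₀ hq.ne_zero
      linear_combination hm
    obtain ⟨b, hb⟩ := ih a' ⟨m, hm'⟩
    exact ⟨b, by rw [hb]; ring⟩

lemma not_dvd_fib_succ (hp : p.Prime) {n : ℕ} (hpn : p ∣ Nat.fib n) :
    ¬ p ∣ Nat.fib (n+1) := by
  intro hd
  have h1 : p ∣ Nat.gcd (Nat.fib n) (Nat.fib (n+1)) := Nat.dvd_gcd hpn hd
  rw [Nat.fib_coprime_fib_succ n] at h1
  have := Nat.le_of_dvd one_pos h1
  have := hp.two_le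
  omega

lemma step1 (hp : p.Prime) {n v k : ℕ} (hv : 1 ≤ v) (h1 : p^v ∣ Nat.fib n)
    (h2 : ¬ p^(v+1) ∣ Nat.fib n) (hk : ¬ p ∣ k) :
    p^v ∣ Nat.fib (k*n) ∧ ¬ p^(v+1) ∣ Nat.fib (k*n) := by
  obtain ⟨x, y, hA, -⟩ := key_id n k
  set c : ℤ := (Nat.fib n : ℤ) with hcdef
  set d : ℤ := (Nat.fib (n+1) : ℤ) with hddef
  have hq : Prime (p : ℤ) := prime_int hp
  have hpn : p ∣ Nat.fib n := dvd_trans (dvd_pow_self p (by omega)) h1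
  have hd : ¬ (p:ℤ) ∣ d := by
    rw [hddef, Int.natCast_dvd_natCast]
    exact not_dvd_fib_succ hp hpn
  set P : ℤ := (p:ℤ)^v with hPdef
  have hPc : P ∣ c := by
    rw [hcdef, hPdef]
    exact_mod_cast Int.natCast_dvd_natCast.mpr h1
  obtain ⟨c₀, hc⟩ := hPc
  have hc₀ : ¬ (p:ℤ) ∣ c₀ := by
    intro hdd
    apply h2
    have hz : (p:ℤ)^(v+1) ∣ c := by
      rw [hc, pow_succ]
      exact mul_dvd_mul (dvd_refl P) hdd
    rw [hcdef] at hz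
    exact_mod_cast hz
  have hA2 : (Nat.fib (k*n) : ℤ) * d^2 =
      P * ((k:ℤ)*c₀*d^(k+1) + P*(-((k.choose 2 : ℕ):ℤ)*c₀^2*d^k + x*P*c₀^3)) := by
    linear_combination hA + ((k:ℤ)*d^(k+1) - ((k.choose 2 : ℕ):ℤ)*d^k*(c + P*c₀)
      + x*(c^2 + c*P*c₀ + P^2*c₀^2)) * hc
  have hPne : P ≠ 0 := pow_ne_zero _ (Int.natCast_ne_zero.mpr hp.pos.ne')
  constructor
  · have hdvd : P ∣ ((Nat.fib (k*n) : ℤ) * d) * d := by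
      rw [mul_assoc, ← sq]; exact ⟨_, hA2⟩
    have hstep := int_pow_dvd_of_dvd_mul hq hd v _ hdvd
    have hstep2 := int_pow_dvd_of_dvd_mul hq hd v _ hstep
    exact_mod_cast hstep2
  · intro hcon
    have hconZ : (p:ℤ)^(v+1) ∣ (Nat.fib (k*n) : ℤ) := by exact_mod_cast hcon
    have hdd : (p:ℤ)^(v+1) ∣ (Nat.fib (k*n) : ℤ) * d^2 := hconZ.mul_right _
    rw [hA2, pow_succ, hPdef] at hdd
    have hpne : ((p:ℤ)) ≠ 0 := Int.natCast_ne_zero.mpr hp.pos.ne'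
    have hE : (p:ℤ) ∣ ((k:ℤ)*c₀*d^(k+1) + (p:ℤ)^v*(-((k.choose 2 : ℕ):ℤ)*c₀^2*d^k + x*(p:ℤ)^v*c₀^3)) :=
      (mul_dvd_mul_iff_left (pow_ne_zero v hpne)).mp hdd
    have hPp : (p:ℤ) ∣ (p:ℤ)^v := dvd_pow_self _ (by omega)
    have hterm : (p:ℤ) ∣ (k:ℤ)*c₀*d^(k+1) := by
      have h6 := dvd_sub hE (hPp.mul_right ((-((k.choose 2 : ℕ):ℤ)*c₀^2*d^k + x*(p:ℤ)^v*c₀^3)))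
      simpa using h6
    rcases hq.dvd_mul.mp hterm with h' | h'
    · rcases hq.dvd_mul.mp h' with h'' | h''
      · exact hk (by exact_mod_cast h'')
      · exact hc₀ h''
    · exact hd (hq.dvd_of_dvd_pow h')

lemma step2 (hp : p.Prime) (hodd : 2 < p) {n w : ℕ} (h1 : p^(w+1) ∣ Nat.fib n)
    (h2 : ¬ p^(w+2) ∣ Nat.fib n) :
    p^(w+2) ∣ Nat.fib (p*n) ∧ ¬ p^(w+3) ∣ Nat.fib (p*n) := by
  obtain ⟨x, y, hA, -⟩ := key_id n p
  set c : ℤ := (Nat.fib n : ℤ) with hcdef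
  set d : ℤ := (Nat.fib (n+1) : ℤ) with hddef
  have hq : Prime (p : ℤ) := prime_int hp
  have hpn : p ∣ Nat.fib n := dvd_trans (dvd_pow_self p (by omega)) h1
  have hd : ¬ (p:ℤ) ∣ d := by
    rw [hddef, Int.natCast_dvd_natCast]
    exact not_dvd_fib_succ hp hpn
  set Q : ℤ := (p:ℤ)^w with hQdef
  have hQc : Q * (p:ℤ) ∣ c := by
    rw [hcdef, hQdef, ← pow_succ]
    exact_mod_cast Int.natCast_dvd_natCast.mpr h1
  obtain ⟨c₀, hc⟩ := hQc
  rw [mul_assoc] at hc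
  have hc₀ : ¬ (p:ℤ) ∣ c₀ := by
    intro hdd
    apply h2
    have hz : (p:ℤ)^(w+2) ∣ c := by
      rw [hc]
      obtain ⟨u, hu⟩ := hdd
      exact ⟨u, by rw [hu]; ring⟩
    rw [hcdef] at hz
    exact_mod_cast hz
  -- p divides choose p 2
  obtain ⟨C₀, hC⟩ : (p:ℤ) ∣ ((p.choose 2 : ℕ) : ℤ) := by
    have := hp.dvd_choose_self (by norm_num) hodd
    exact_mod_cast Int.natCast_dvd_natCast.mpr this
  have hA2 : (Nat.fib (p*n) : ℤ) * d^2 =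
      (Q*(p:ℤ)^2) * (c₀*d^(p+1)) + (Q*(p:ℤ)^3) * (-C₀*Q*c₀^2*d^p + x*Q^2*c₀^3) := by
    linear_combination hA + ((p:ℤ)*d^(p+1) - ((p.choose 2 : ℕ):ℤ)*d^p*(c + Q*(p:ℤ)*c₀)
      + x*(c^2 + c*Q*(p:ℤ)*c₀ + Q^2*(p:ℤ)^2*c₀^2)) * hc + (-(d^p)*Q^2*(p:ℤ)^2*c₀^2) * hC
  have hQne : Q ≠ 0 := pow_ne_zero _ (Int.natCast_ne_zero.mpr hp.pos.ne')
  have hpne : ((p:ℤ)) ≠ 0 := Int.natCast_ne_zero.mpr hp.pos.ne'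
  have hpow2 : ((p:ℕ):ℤ)^(w+2) = Q*(p:ℤ)^2 := by rw [hQdef, ← pow_add]
  have hpow3 : ((p:ℕ):ℤ)^(w+3) = Q*(p:ℤ)^3 := by rw [hQdef, ← pow_add]
  constructor
  · have hdvd : Q*(p:ℤ)^2 ∣ (Nat.fib (p*n) : ℤ) * d^2 := by
      rw [hA2]
      exact dvd_add ⟨_, rfl⟩ (Dvd.dvd.mul_right ⟨(p:ℤ), by ring⟩ _)
    have hdvd' : ((p:ℤ))^(w+2) ∣ ((Nat.fib (p*n) : ℤ) * d) * d := by
      rw [mul_assoc, ← sq, hpow2]; exact hdvd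
    have hstep := int_pow_dvd_of_dvd_mul hq hd (w+2) _ hdvd'
    have hstep2 := int_pow_dvd_of_dvd_mul hq hd (w+2) _ hstep
    exact_mod_cast hstep2
  · intro hcon
    have hconZ : (p:ℤ)^(w+3) ∣ (Nat.fib (p*n) : ℤ) * d^2 :=
      (by exact_mod_cast hcon : ((p:ℤ))^(w+3) ∣ (Nat.fib (p*n):ℤ)).mul_right _
    rw [hA2, hpow3] at hconZ
    have h4 : Q*(p:ℤ)^3 ∣ (Q*(p:ℤ)^2) * (c₀*d^(p+1)) := by
      have h5 := dvd_sub hconZ (dvd_mul_right (Q*(p:ℤ)^3) (-C₀*Q*c₀^2*d^p + x*Q^2*c₀^3))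
      simpa using h5
    have h6 : (Q*(p:ℤ)^2)*(p:ℤ) ∣ (Q*(p:ℤ)^2) * (c₀*d^(p+1)) := by
      rw [show (Q*(p:ℤ)^2)*(p:ℤ) = Q*(p:ℤ)^3 from by ring]
      exact h4
    have h7 : (p:ℤ) ∣ c₀*d^(p+1) :=
      (mul_dvd_mul_iff_left (mul_ne_zero hQne (pow_ne_zero 2 hpne))).mp h6
    rcases hq.dvd_mul.mp h7 with h' | h'
    · exact hc₀ h'
    · exact hd (hq.dvd_of_dvd_pow h')
end D



section EF
variable {p : ℕ}

lemma val_eq (hp : p.Prime) {n v : ℕ} (hn : n ≠ 0) (h1 : p^v ∣ n) (h2 : ¬ p^(v+1) ∣ n) :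
    padicValNat p n = v := by
  haveI : Fact p.Prime := ⟨hp⟩
  have hle : v ≤ padicValNat p n := (padicValNat_dvd_iff_le hn).mp h1
  have hlt : ¬ (v+1 ≤ padicValNat p n) := fun hc => h2 ((padicValNat_dvd_iff_le hn).mpr hc)
  omega

lemma lte_fib (hp : p.Prime) (hodd : 2 < p) {a : ℕ} (ha1 : p^1 ∣ Nat.fib a)
    (ha2 : ¬ p^2 ∣ Nat.fib a) :
    ∀ k, 0 < k → p^(padicValNat p k + 1) ∣ Nat.fib (k*a) ∧
      ¬ p^(padicValNat p k + 2) ∣ Nat.fib (k*a) := by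
  haveI : Fact p.Prime := ⟨hp⟩
  intro k
  induction k using Nat.strong_induction_on with
  | _ k ih =>
    intro hk
    by_cases hpk : p ∣ k
    · obtain ⟨k', rfl⟩ := hpk
      have hk' : 0 < k' := by
        rcases Nat.eq_zero_or_pos k' with rfl | h
        · simp at hk
        · exact h
      have hlt : k' < p*k' := by
        calc k' = 1*k' := (one_mul k').symm
        _ < p*k' := (Nat.mul_lt_mul_right hk').mpr hp.one_lt
      have IH := ih k' hlt hk'
      have hstep := step2 hp hodd (n := k'*a) (w := padicValNat p k') IH.1 IH.2
      have hv : padicValNat p (p*k') = padicValNat p k' + 1 := by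
        rw [padicValNat.mul hp.pos.ne' hk'.ne', padicValNat.self hp.one_lt]
        omega
      rw [hv]
      have e : p*k'*a = p*(k'*a) := by ring
      rw [e]
      exact hstep
    · have hv : padicValNat p k = 0 := padicValNat.eq_zero_of_not_dvd hpk
      rw [hv]
      exact step1 hp (le_refl 1) ha1 ha2 hpk

lemma val_formula (hp : p.Prime) (hodd : 2 < p) (hd : p ∣ Nat.fib (p-1))
    (hwall : padicValNat p (Nat.fib (fibAlpha p)) = 1)
    {m : ℕ} (hm : 0 < m) :
    padicValNat p (Nat.fib m) =
      if fibAlpha p ∣ m then padicValNat p m + 1 else 0 := by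
  haveI : Fact p.Prime := ⟨hp⟩
  have hα := alpha_spec hp hd
  have hfibne : Nat.fib (fibAlpha p) ≠ 0 := (Nat.fib_pos.mpr hα.1).ne'
  have ha1 : p^1 ∣ Nat.fib (fibAlpha p) := by
    rw [← hwall]; exact pow_padicValNat_dvd
  have ha2 : ¬ p^2 ∣ Nat.fib (fibAlpha p) := by
    have h := pow_succ_padicValNat_not_dvd (p := p) hfibne
    rw [hwall] at h
    exact h
  split_ifs with hdvd
  · obtain ⟨k, rfl⟩ := hdvd
    have hk : 0 < k := by
      rcases Nat.eq_zero_or_pos k with rfl | h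
      · simp at hm
      · exact h
    have hE := lte_fib hp hodd ha1 ha2 k hk
    have e : k * fibAlpha p = fibAlpha p * k := Nat.mul_comm _ _
    rw [e] at hE
    have hne : Nat.fib (fibAlpha p * k) ≠ 0 := (Nat.fib_pos.mpr (by positivity)).ne'
    have hval := val_eq hp hne hE.1 (by
      have : padicValNat p k + 1 + 1 = padicValNat p k + 2 := rfl
      rw [this]; exact hE.2)
    rw [hval]
    have hvm : padicValNat p (fibAlpha p * k) = padicValNat p k := by
      rw [padicValNat.mul hα.1.ne' hk.ne',
        padicValNat.eq_zero_of_not_dvd (p_not_dvd_alpha hp hd)]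
      omega
    rw [hvm]
  · exact padicValNat.eq_zero_of_not_dvd (fun hc => hdvd ((dvd_fib_iff hp hd _).mp hc))

end EF

section G
variable {p : ℕ}

lemma H1 (hp : p.Prime) (hodd : 2 < p) (hd : p ∣ Nat.fib (p-1))
    (hwall : padicValNat p (Nat.fib (fibAlpha p)) = 1) {j : ℕ} (hj : j ≤ p - 2) (n : ℕ) :
    padicValNat p (Nat.fib (p*n+j+1)) = if fibAlpha p ∣ n+j+1 then 1 else 0 := by
  have hm : 0 < p*n+j+1 := by omega
  rw [val_formula hp hodd hd hwall hm]
  have hnp : ¬ p ∣ p*n+j+1 := by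
    intro hdv
    rw [add_assoc] at hdv
    have h2 : p ∣ j+1 := (Nat.dvd_add_right (dvd_mul_right p n)).mp hdv
    have := Nat.le_of_dvd (by omega) h2
    omega
  have hiff : (fibAlpha p ∣ p*n+j+1) ↔ (fibAlpha p ∣ n+j+1) := by
    obtain ⟨q, hq⟩ : ∃ q, p = q+1 := ⟨p-1, by omega⟩
    have e : p*n+j+1 = (p-1)*n + (n+j+1) := by
      subst hq; simp only [Nat.add_sub_cancel]; ring
    rw [e, Nat.dvd_add_right ((alpha_dvd_pred hp hd).mul_right n)]
  rw [if_congr hiff rfl rfl, padicValNat.eq_zero_of_not_dvd hnp]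

lemma H2 (hp : p.Prime) (hodd : 2 < p) (hd : p ∣ Nat.fib (p-1))
    (hwall : padicValNat p (Nat.fib (fibAlpha p)) = 1) {e i s t : ℕ}
    (hst : i+1 = p^s * t) (ht : ¬ p ∣ t) (hse : s < e) (n : ℕ) :
    padicValNat p (Nat.fib (p^e*n+i+1)) = if fibAlpha p ∣ n+i+1 then s+1 else 0 := by
  have hm : 0 < p^e*n+i+1 := by omega
  rw [val_formula hp hodd hd hwall hm]
  have hiff : (fibAlpha p ∣ p^e*n+i+1) ↔ (fibAlpha p ∣ n+i+1) := by
    have hdd : (p-1) ∣ p^e - 1 := by simpa using Nat.sub_dvd_pow_sub_pow p 1 e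
    have hα : fibAlpha p ∣ p^e - 1 := (alpha_dvd_pred hp hd).trans hdd
    have hpe : 1 ≤ p^e := Nat.one_le_pow e p hp.pos
    obtain ⟨q, hq⟩ : ∃ q, p^e = q+1 := ⟨p^e - 1, by omega⟩
    have e1 : p^e*n+i+1 = (p^e-1)*n + (n+i+1) := by
      rw [hq]; simp only [Nat.add_sub_cancel]; ring
    rw [e1, Nat.dvd_add_right (hα.mul_right n)]
  have hsplit : p^e*n+i+1 = p^s*(p^(e-s)*n + t) := by
    have hee : p^e = p^s * p^(e-s) := by rw [← pow_add]; congr 1; omega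
    rw [add_assoc, hst, hee]; ring
  have hval : padicValNat p (p^e*n+i+1) = s := by
    apply val_eq hp (by omega)
    · rw [hsplit]; exact Dvd.intro _ rfl
    · intro hcon
      rw [hsplit, pow_succ] at hcon
      have h3 : p ∣ p^(e-s)*n + t :=
        (Nat.mul_dvd_mul_iff_left (Nat.pow_pos (n := s) hp.pos)).mp hcon
      have h4 : p ∣ t :=
        (Nat.dvd_add_right ((dvd_pow_self p (by omega : e-s ≠ 0)).mul_right n)).mp h3
      exact ht h4
  rw [if_congr hiff rfl rfl, hval]

lemma H3 (hp : p.Prime) (hodd : 2 < p) (hd : p ∣ Nat.fib (p-1))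
    (hwall : padicValNat p (Nat.fib (fibAlpha p)) = 1) (e n : ℕ) :
    padicValNat p (Nat.fib (p^e*(n+1))) =
      if fibAlpha p ∣ n+1 then padicValNat p (n+1) + 1 + e else 0 := by
  haveI : Fact p.Prime := ⟨hp⟩
  have hpe : 0 < p^e := Nat.pow_pos (n := e) hp.pos
  have hm : 0 < p^e*(n+1) := by positivity
  rw [val_formula hp hodd hd hwall hm]
  have hcop : Nat.Coprime (fibAlpha p) (p^e) :=
    (((Nat.Prime.coprime_iff_not_dvd hp).mpr (p_not_dvd_alpha hp hd)).symm).pow_right e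
  have hiff : (fibAlpha p ∣ p^e*(n+1)) ↔ (fibAlpha p ∣ n+1) := by
    constructor
    · intro hdv
      exact hcop.dvd_of_dvd_mul_right (by rwa [mul_comm] at hdv)
    · intro hdv
      exact hdv.mul_left _
  have hval : padicValNat p (p^e*(n+1)) = e + padicValNat p (n+1) := by
    rw [padicValNat.mul hpe.ne' (Nat.succ_ne_zero n), padicValNat.prime_pow]
  rw [if_congr hiff rfl rfl, hval]
  split_ifs with hcase
  · ring
  · rfl

end G
theorem p_regular_1_4 (p : ℕ) (hp : p.Prime) (h : p % 5 = 1 ∨ p % 5 = 4)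
    (hwall : padicValNat p (Nat.fib (fibAlpha p)) = 1) :
    Submodule.span ℤ (kKernel p (fun n => (padicValNat p (Nat.fib (n + 1)) : ℤ))) =
      Submodule.span ℤ
        ({fun n => (padicValNat p (Nat.fib (n + 1)) : ℤ)} ∪
          {b | ∃ j ≤ p - 2,
            b = fun n => (padicValNat p (Nat.fib (p * n + j + 1)) : ℤ)}) ∧
    (Submodule.span ℤ
        (kKernel p (fun n => (padicValNat p (Nat.fib (n + 1)) : ℤ)))).FG ∧
    Module.rank ℤ
        (Submodule.span ℤ
          (kKernel p (fun n => (padicValNat p (Nat.fib (n + 1)) : ℤ)))) ≤ p := by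
  classical
  haveI : Fact p.Prime := ⟨hp⟩
  have h2le := hp.two_le
  have hodd : 2 < p := by omega
  have hd : p ∣ Nat.fib (p-1) := dvd_fib_pred hp h
  have hα := alpha_spec hp hd
  have hαle : fibAlpha p ≤ p - 1 := alpha_le_pred hp hd
  set A : ℕ → ℤ := fun n => (padicValNat p (Nat.fib (n + 1)) : ℤ) with hAdef
  set G : Set (ℕ → ℤ) :=
    {A} ∪ {b | ∃ j ≤ p - 2,
      b = fun n => (padicValNat p (Nat.fib (p * n + j + 1)) : ℤ)} with hGdef
  have hmemA : A ∈ G := Set.mem_union_left _ rfl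
  have hmemg : ∀ j, j ≤ p-2 →
      (fun n => (padicValNat p (Nat.fib (p * n + j + 1)) : ℤ)) ∈ G :=
    fun j hj => Set.mem_union_right _ ⟨j, hj, rfl⟩
  have hspan : Submodule.span ℤ (kKernel p A) = Submodule.span ℤ G := by
    apply le_antisymm
    · rw [Submodule.span_le]
      rintro b ⟨e, i, hi, rfl⟩
      have hpe : 1 ≤ p^e := Nat.one_le_pow e p hp.pos
      show (fun n => (padicValNat p (Nat.fib (p^e*n+i+1)) : ℤ)) ∈ (Submodule.span ℤ G : Set (ℕ → ℤ))
      by_cases hb : i + 1 = p^e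
      · -- boundary case
        have hfun : (fun n => (padicValNat p (Nat.fib (p^e*n+i+1)) : ℤ)) =
            A + (e : ℤ) • (fun n => (padicValNat p (Nat.fib (p*n+0+1)) : ℤ)) := by
          funext n
          show (padicValNat p (Nat.fib (p^e*n+i+1)) : ℤ) =
            (padicValNat p (Nat.fib (n+1)) : ℤ) +
              (e:ℤ) * (padicValNat p (Nat.fib (p*n+0+1)) : ℤ)
          have e1 : p^e*n+i+1 = p^e*(n+1) := by
            rw [add_assoc, hb, ← Nat.mul_succ]
          rw [e1, H3 hp hodd hd hwall e n,
            val_formula hp hodd hd hwall (Nat.succ_pos n),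
            H1 hp hodd hd hwall (show (0:ℕ) ≤ p-2 by omega) n]
          simp only [Nat.add_zero]
          split_ifs <;> push_cast <;> ring
        rw [hfun]
        exact Submodule.add_mem _ (Submodule.subset_span hmemA)
          (Submodule.smul_mem _ _ (Submodule.subset_span (hmemg 0 (by omega))))
      · -- interior case
        have hilt : i + 1 < p^e := by omega
        set s := padicValNat p (i+1) with hsdef
        set t := (i+1) / p^s with htdef
        have hst : i+1 = p^s * t := (Nat.mul_div_cancel' pow_padicValNat_dvd).symm
        have ht : ¬ p ∣ t := by
          intro hc
          have hnd := pow_succ_padicValNat_not_dvd (p := p) (show i+1 ≠ 0 by omega)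
          apply hnd
          obtain ⟨u, hu⟩ := hc
          refine ⟨u, ?_⟩
          show i+1 = p^(s+1)*u
          rw [hst, hu, pow_succ]; ring
        have hse : s < e := by
          by_contra hc
          push_neg at hc
          have h5 : p^e ∣ i+1 := dvd_trans (pow_dvd_pow p hc) pow_padicValNat_dvd
          have := Nat.le_of_dvd (by omega) h5
          omega
        set j := i % fibAlpha p with hjdef
        have hjlt : j < fibAlpha p := Nat.mod_lt i hα.1
        have hjle : j ≤ p - 2 := by omega
        have hfun : (fun n => (padicValNat p (Nat.fib (p^e*n+i+1)) : ℤ)) =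
            ((s:ℤ)+1) • (fun n => (padicValNat p (Nat.fib (p*n+j+1)) : ℤ)) := by
          funext n
          show (padicValNat p (Nat.fib (p^e*n+i+1)) : ℤ) =
            ((s:ℤ)+1) * (padicValNat p (Nat.fib (p*n+j+1)) : ℤ)
          rw [H2 hp hodd hd hwall hst ht hse n, H1 hp hodd hd hwall hjle n]
          have hiff : (fibAlpha p ∣ n+i+1) ↔ (fibAlpha p ∣ n+j+1) := by
            obtain ⟨q, hq⟩ : ∃ q, i = fibAlpha p * q + j :=
              ⟨i / fibAlpha p, by rw [hjdef, Nat.div_add_mod]⟩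
            have e2 : n+i+1 = fibAlpha p * q + (n+j+1) := by rw [hq]; ring
            rw [e2, Nat.dvd_add_right (dvd_mul_right _ _)]
          rw [if_congr hiff rfl rfl]
          split_ifs <;> push_cast <;> ring
        rw [hfun]
        exact Submodule.smul_mem _ _ (Submodule.subset_span (hmemg j hjle))
    · rw [Submodule.span_le]
      rintro b hb
      rcases hb with hb | ⟨j, hj, rfl⟩
      · rw [Set.mem_singleton_iff] at hb
        subst hb
        apply Submodule.subset_span
        refine ⟨0, 0, by norm_num, ?_⟩
        funext n
        simp
      · apply Submodule.subset_span
        refine ⟨1, j, by rw [pow_one]; omega, ?_⟩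
        funext n
        simp [pow_one, hAdef]
  refine ⟨hspan, ?_, ?_⟩
  · -- FG
    have hfin : G.Finite := by
      apply Set.Finite.union (Set.finite_singleton _)
      have himg : {b | ∃ j ≤ p-2,
          b = fun n => (padicValNat p (Nat.fib (p*n+j+1)) : ℤ)} =
          (fun (j : ℕ) => (fun n => (padicValNat p (Nat.fib (p*n+j+1)) : ℤ))) ''
            (Set.Iic (p-2)) := by
        ext b
        simp only [Set.mem_setOf_eq, Set.mem_image, Set.mem_Iic]
        constructor
        · rintro ⟨j, hj, rfl⟩; exact ⟨j, hj, rfl⟩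
        · rintro ⟨j, hj, rfl⟩; exact ⟨j, hj, rfl⟩
      rw [himg]
      exact (Set.finite_Iic _).image _
    rw [hspan]
    exact Submodule.fg_span hfin
  · -- rank
    set F : Fin p → (ℕ → ℤ) := fun j =>
      if (j : ℕ) = 0 then A
      else (fun n => (padicValNat p (Nat.fib (p*n+((j:ℕ)-1)+1)) : ℤ)) with hFdef
    have hsub : G ⊆ Set.range F := by
      rintro b hb
      rcases hb with hb | ⟨j, hj, rfl⟩
      · rw [Set.mem_singleton_iff] at hb
        subst hb
        exact ⟨⟨0, hp.pos⟩, by simp [hFdef]⟩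
      · refine ⟨⟨j+1, by omega⟩, ?_⟩
        simp only [hFdef]
        rw [if_neg (by simp)]
        simp
    have h1 : Module.rank ℤ (Submodule.span ℤ (kKernel p A)) ≤
        Module.rank ℤ (Submodule.span ℤ (Set.range F)) := by
      rw [hspan]
      exact Submodule.rank_mono (Submodule.span_mono hsub)
    have h2 : Module.rank ℤ (Submodule.span ℤ (Set.range F)) ≤ (p : Cardinal) := by
      refine le_trans (rank_span_le (Set.range F)) ?_
      refine le_trans Cardinal.mk_range_le ?_
      rw [Cardinal.mk_fin]
    exact le_trans h1 h2
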